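/- Let λ > 1 be a natural number, f(x) = λx mod 1, 0 < θ < 1, and v : S¹ → ℝ continuous. Then the unique bounded solution α(x) = -∑_{i=0}^∞ v(fⁱ(x)) λ^{-θ(i+1)} of the twisted cohomological equation is a θ-Hölder continuous function, with Hölder constant bounded explicitly by 2M'/(λ^{-θ}(1-λ^{θ-1})) + 4M/(λ^{2θ}(1-λ^{-θ})) when v is C¹ with max|v| = M and max|v'| = M'. -/

import Mathlib

open Real
set_option maxHeartbeats 1000000

lemma stmt8_key (B : ℝ) (hB1 : 1 < B) (θ : ℝ) (hθ0 : 0 < θ) (hθ1 : θ < 1)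
    (v : ℝ → ℝ) (M M' : ℝ) (hM : ∀ y, |v y| ≤ M) (hM'0 : 0 ≤ M')
    (lip : ∀ y s : ℝ, |v (y + s) - v y| ≤ M' * |s|)
    (cap : ∀ y z : ℝ, |v y - v z| ≤ M' / 2)
    (x h : ℝ) (hh0 : 0 < h) (hh1 : h < B⁻¹ / 2) :
    |∑' i : ℕ, (v (B ^ i * x) - v (B ^ i * (x + h))) * (B ^ (-θ)) ^ (i + 1)|
      ≤ (2 * M' / (B ^ (-θ) * (1 - B ^ (θ - 1)))
          + 4 * M / (B ^ (2 * θ) * (1 - B ^ (-θ)))) * h ^ θ := by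
  have hB0 : (0:ℝ) < B := lt_trans one_pos hB1
  set β : ℝ := B ^ (-θ) with hβdef
  have hβ0 : 0 < β := Real.rpow_pos_of_pos hB0 _
  have hβ1 : β < 1 := Real.rpow_lt_one_of_one_lt_of_neg hB1 (by linarith)
  have hM0 : 0 ≤ M := le_trans (abs_nonneg _) (hM 0)
  have hβinv : β⁻¹ = B ^ θ := by rw [hβdef, Real.rpow_neg hB0.le, inv_inv]
  have hβmul : β * B ^ θ = 1 := by rw [← hβinv]; exact mul_inv_cancel₀ hβ0.ne'
  have hBθ1 : 1 ≤ B ^ θ := by nlinarith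
  have hβB : β ≤ B ^ θ := by nlinarith
  have hD1 : 0 < 1 - B ^ (θ - 1) := by
    have : B ^ (θ - 1) < 1 := Real.rpow_lt_one_of_one_lt_of_neg hB1 (by linarith)
    linarith
  have hD2 : 0 < 1 - β := by linarith
  have hhp : 0 ≤ h ^ θ := Real.rpow_nonneg hh0.le _
  -- find N
  have hex : ∃ n : ℕ, 1/2 < B ^ n * h := by
    obtain ⟨n, hn⟩ := pow_unbounded_of_one_lt (1 / (2*h)) hB1
    exact ⟨n, by rw [div_lt_iff₀ (by positivity)] at hn; nlinarith⟩
  set N := Nat.find hex with hNdef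
  have hN : 1/2 < B ^ N * h := Nat.find_spec hex
  have hNmin : ∀ m, m < N → B ^ m * h ≤ 1/2 := fun m hm => not_lt.1 (Nat.find_min hex hm)
  have hN1 : 1 ≤ N := by
    by_contra hcon
    have hN0 : N = 0 := by omega
    rw [hN0, pow_zero, one_mul] at hN
    have : B⁻¹ ≤ 1 := by rw [inv_le_one_iff₀]; right; exact hB1.le
    linarith
  have hNpred : B ^ (N-1) * h ≤ 1/2 := hNmin _ (by omega)
  set μ := min (2*M) (M'/2) with hμdef
  have hμ0 : 0 ≤ μ := le_min (by linarith) (by linarith)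
  set φ : ℕ → ℝ := fun i => (if i < N then M' * (B ^ i * h) else μ) * β ^ (i+1) with hφdef
  have hφ0 : ∀ i, 0 ≤ φ i := by
    intro i; rw [hφdef]; dsimp only
    split
    · positivity
    · positivity
  have hterm : ∀ i, |v (B ^ i * x) - v (B ^ i * (x+h))| * β ^ (i+1) ≤ φ i := by
    intro i; rw [hφdef]; dsimp only
    by_cases hi : i < N
    · rw [if_pos hi]
      refine mul_le_mul_of_nonneg_right ?_ (pow_nonneg hβ0.le _)
      rw [abs_sub_comm, show B ^ i * (x + h) = (B ^ i * x) + B ^ i * h by ring]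
      calc |v (B ^ i * x + B ^ i * h) - v (B ^ i * x)| ≤ M' * |B ^ i * h| := lip _ _
        _ = M' * (B ^ i * h) := by rw [abs_of_pos (by positivity)]
    · rw [if_neg hi]
      refine mul_le_mul_of_nonneg_right (le_min ?_ (cap _ _)) (pow_nonneg hβ0.le _)
      calc |v (B ^ i * x) - v (B ^ i * (x+h))| ≤ |v (B ^ i * x)| + |v (B ^ i * (x+h))| :=
            abs_sub _ _
        _ ≤ 2 * M := by linarith [hM (B ^ i * x), hM (B ^ i * (x+h))]
  have hgeo : Summable (fun i : ℕ => ((max (M' * (B ^ N * h)) μ) * β) * β ^ i) :=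
    (summable_geometric_of_lt_one hβ0.le hβ1).mul_left _
  have hφsum : Summable φ := by
    refine Summable.of_nonneg_of_le hφ0 (fun i => ?_) hgeo
    rw [hφdef]; dsimp only
    have hstep : (if i < N then M' * (B ^ i * h) else μ) ≤ max (M' * (B ^ N * h)) μ := by
      split
      · refine le_max_of_le_left ?_
        have : B ^ i ≤ B ^ N := pow_le_pow_right₀ hB1.le (by omega)
        have := mul_le_mul_of_nonneg_right this hh0.le
        nlinarith
      · exact le_max_right _ _
    calc (if i < N then M' * (B ^ i * h) else μ) * β ^ (i+1)
        ≤ (max (M' * (B ^ N * h)) μ) * β ^ (i+1) :=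
          mul_le_mul_of_nonneg_right hstep (pow_nonneg hβ0.le _)
      _ = ((max (M' * (B ^ N * h)) μ) * β) * β ^ i := by rw [pow_succ]; ring
  have habs : Summable (fun i : ℕ => |v (B ^ i * x) - v (B ^ i * (x+h))| * β ^ (i+1)) :=
    Summable.of_nonneg_of_le (fun i => by positivity) hterm hφsum
  -- head bound
  set q : ℝ := B ^ (1 - θ) with hqdef
  have hBβ : B * β = q := by
    rw [hqdef, hβdef, show (1:ℝ) - θ = 1 + (-θ) by ring, Real.rpow_add hB0, Real.rpow_one]
  have hq1 : 1 < q := Real.one_lt_rpow_iff_of_pos hB0 |>.2 (Or.inl ⟨hB1, by linarith⟩)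
  have hq0 : 0 < q := lt_trans one_pos hq1
  have hqinv : q⁻¹ = B ^ (θ - 1) := by
    rw [hqdef, ← Real.rpow_neg hB0.le]; norm_num
  have hqD1 : q - 1 = q * (1 - B ^ (θ - 1)) := by
    rw [← hqinv]; field_simp
  have head_eq : ∑ i ∈ Finset.range N, φ i
      = (M' * h * β) * ∑ i ∈ Finset.range N, q ^ i := by
    rw [Finset.mul_sum]
    refine Finset.sum_congr rfl (fun i hi => ?_)
    rw [hφdef]; dsimp only
    rw [if_pos (Finset.mem_range.1 hi), ← hBβ, mul_pow, pow_succ]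
    ring
  have hgeosum : ∑ i ∈ Finset.range N, q ^ i ≤ q ^ N / (q - 1) := by
    rw [geom_sum_eq hq1.ne', div_le_div_iff_of_pos_right (by linarith : 0 < q - 1)]
    linarith
  have hqpow : q ^ (N-1) = ((B ^ (N-1) : ℝ)) ^ (1-θ) := by
    rw [hqdef, ← Real.rpow_natCast (B ^ (1-θ)) (N-1), ← Real.rpow_mul hB0.le,
      ← Real.rpow_natCast B (N-1), ← Real.rpow_mul hB0.le, mul_comm]
  have hPle : (B ^ (N-1) : ℝ) ≤ 1/(2*h) := by
    rw [le_div_iff₀ (by positivity)]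
    nlinarith [hNpred]
  have hhq : h * q ^ (N-1) ≤ h ^ θ := by
    have h1 : q ^ (N-1) ≤ (1/(2*h)) ^ (1-θ) := by
      rw [hqpow]
      exact Real.rpow_le_rpow (by positivity) hPle (by linarith)
    have h2 : h * (1/(2*h)) ^ (1-θ) ≤ h ^ θ := by
      have e : (1/(2*h)) ^ (1-θ) = ((2*h) ^ (1-θ))⁻¹ := by
        rw [one_div, Real.inv_rpow (by positivity)]
      rw [e, ← div_eq_mul_inv, div_le_iff₀ (by positivity : (0:ℝ) < (2*h) ^ (1-θ))]
      have e2 : h ^ θ * (2*h) ^ (1-θ) = 2 ^ (1-θ) * h := by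
        rw [Real.mul_rpow (by norm_num) hh0.le, ← mul_assoc,
          mul_comm (h ^ θ), mul_assoc, ← Real.rpow_add hh0]
        norm_num
      rw [e2]
      have h3 : (1:ℝ) ≤ (2:ℝ) ^ (1-θ) := by
        calc (1:ℝ) = (2:ℝ) ^ (0:ℝ) := (Real.rpow_zero 2).symm
          _ ≤ (2:ℝ) ^ (1-θ) :=
              Real.rpow_le_rpow_of_exponent_le one_le_two (by linarith)
      nlinarith
    calc h * q ^ (N-1) ≤ h * (1/(2*h)) ^ (1-θ) :=
          mul_le_mul_of_nonneg_left h1 hh0.le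
      _ ≤ h ^ θ := h2
  have head_le : ∑ i ∈ Finset.range N, φ i ≤ M' * (B ^ θ) / (1 - B ^ (θ-1)) * h ^ θ := by
    rw [head_eq]
    have e1 : q ^ N = q ^ (N-1) * q := by
      rw [← pow_succ]; congr 1; omega
    calc (M' * h * β) * ∑ i ∈ Finset.range N, q ^ i
        ≤ (M' * h * β) * (q ^ N / (q - 1)) := by
          refine mul_le_mul_of_nonneg_left hgeosum (by positivity)
      _ = M' * β / (1 - B ^ (θ-1)) * (h * q ^ (N-1)) := by
          rw [e1, hqD1]; field_simp
      _ ≤ M' * β / (1 - B ^ (θ-1)) * h ^ θ := by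
          refine mul_le_mul_of_nonneg_left hhq (by positivity)
      _ ≤ M' * (B ^ θ) / (1 - B ^ (θ-1)) * h ^ θ := by
          have : M' * β / (1 - B ^ (θ-1)) ≤ M' * (B ^ θ) / (1 - B ^ (θ-1)) := by
            rw [div_le_div_iff_of_pos_right hD1]
            exact mul_le_mul_of_nonneg_left hβB hM'0
          exact mul_le_mul_of_nonneg_right this hhp
  
  -- tail
  have tail_eq : ∑' i : ℕ, φ (i + N) = (μ * β ^ (N+1)) * (1 - β)⁻¹ := by
    have e : ∀ i : ℕ, φ (i + N) = (μ * β ^ (N+1)) * β ^ i := by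
      intro i
      rw [hφdef]; dsimp only
      rw [if_neg (by omega), show i + N + 1 = (N+1) + i by omega, pow_add]
      ring
    rw [tsum_congr e, tsum_mul_left, tsum_geometric_of_lt_one hβ0.le hβ1]
  have hβN : β ^ N ≤ 2 * h ^ θ := by
    have hBN0 : (0:ℝ) < (B:ℝ) ^ N := by positivity
    have e1 : β ^ N = ((B ^ N : ℝ)) ^ (-θ) := by
      rw [hβdef, ← Real.rpow_natCast (B ^ (-θ)) N, ← Real.rpow_mul hB0.le,
        ← Real.rpow_natCast B N, ← Real.rpow_mul hB0.le, mul_comm]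
    have h1 : 1/(2*h) < (B ^ N : ℝ) := by
      rw [div_lt_iff₀ (by positivity)]; nlinarith
    have h2 : (1/(2*h)) ^ θ ≤ ((B ^ N : ℝ)) ^ θ :=
      Real.rpow_le_rpow (by positivity) h1.le hθ0.le
    have h3 : ((B ^ N : ℝ)) ^ (-θ) ≤ (2*h) ^ θ := by
      rw [Real.rpow_neg hBN0.le]
      have e2 : ((1/(2*h)) ^ θ)⁻¹ = (2*h) ^ θ := by
        rw [one_div, Real.inv_rpow (by positivity), inv_inv]
      calc (((B ^ N : ℝ)) ^ θ)⁻¹ ≤ ((1/(2*h)) ^ θ)⁻¹ := by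
            apply inv_anti₀ (by positivity) h2
        _ = (2*h) ^ θ := e2
    have h4 : (2*h) ^ θ ≤ 2 * h ^ θ := by
      rw [Real.mul_rpow (by norm_num) hh0.le]
      have : (2:ℝ) ^ θ ≤ 2 := by
        calc (2:ℝ) ^ θ ≤ (2:ℝ) ^ (1:ℝ) :=
              Real.rpow_le_rpow_of_exponent_le one_le_two hθ1.le
          _ = 2 := Real.rpow_one 2
      nlinarith
    rw [e1]; linarith
  have tail_le : ∑' i : ℕ, φ (i + N)
      ≤ (M' * (B ^ θ) / (1 - B ^ (θ-1)) + 4 * M * β^2 / (1 - β)) * h ^ θ := by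
    rw [tail_eq]
    have step1 : (μ * β ^ (N+1)) * (1 - β)⁻¹ ≤ (2 * μ * β / (1 - β)) * h ^ θ := by
      rw [pow_succ]
      have : μ * (β ^ N * β) * (1-β)⁻¹ = (μ * β * (1-β)⁻¹) * β ^ N := by ring
      rw [this]
      calc (μ * β * (1-β)⁻¹) * β ^ N ≤ (μ * β * (1-β)⁻¹) * (2 * h ^ θ) := by
            refine mul_le_mul_of_nonneg_left hβN ?_
            have : 0 < (1-β)⁻¹ := by positivity
            positivity
        _ = (2 * μ * β / (1 - β)) * h ^ θ := by field_simp
    have step2 : 2 * μ * β / (1 - β) ≤ M' * (B ^ θ) / (1 - B ^ (θ-1)) + 4 * M * β^2 / (1 - β) := by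
      have hMR : M' * β ≤ M' * (B ^ θ) / (1 - B ^ (θ-1)) := by
        calc M' * β ≤ M' * (B ^ θ) := mul_le_mul_of_nonneg_left hβB hM'0
          _ ≤ M' * (B ^ θ) / (1 - B ^ (θ-1)) := by
              rw [le_div_iff₀ hD1]
              have h0 : 0 ≤ M' * (B ^ θ) := by positivity
              nlinarith
      rcases le_total (4*M) M' with hc | hc
      · have hμle : μ ≤ 2*M := min_le_left _ _
        have e3 : 4*M*β/(1-β) = 4*M*β^2/(1-β) + 4*M*β := by field_simp; ring
        have : 2 * μ * β / (1 - β) ≤ 4*M*β/(1-β) := by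
          rw [div_le_div_iff_of_pos_right hD2]
          nlinarith [mul_le_mul_of_nonneg_right hμle hβ0.le]
        have h5 : 4*M*β ≤ M' * β := mul_le_mul_of_nonneg_right hc hβ0.le
        linarith
      · have hμle : μ ≤ M'/2 := min_le_right _ _
        have e3 : M'*β/(1-β) = M'*β^2/(1-β) + M'*β := by field_simp; ring
        have h6 : 2 * μ * β / (1 - β) ≤ M'*β/(1-β) := by
          rw [div_le_div_iff_of_pos_right hD2]
          nlinarith [mul_le_mul_of_nonneg_right hμle hβ0.le]
        have h7 : M'*β^2/(1-β) ≤ 4*M*β^2/(1-β) := by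
          rw [div_le_div_iff_of_pos_right hD2]
          exact mul_le_mul_of_nonneg_right hc (sq_nonneg β)
        linarith
    calc (μ * β ^ (N+1)) * (1 - β)⁻¹ ≤ (2 * μ * β / (1 - β)) * h ^ θ := step1
      _ ≤ (M' * (B ^ θ) / (1 - B ^ (θ-1)) + 4 * M * β^2 / (1 - β)) * h ^ θ :=
          mul_le_mul_of_nonneg_right step2 hhp
  -- assemble
  have hRHS : (2 * M' / (B ^ (-θ) * (1 - B ^ (θ - 1)))
          + 4 * M / (B ^ (2 * θ) * (1 - B ^ (-θ))))
      = 2 * (M' * (B ^ θ) / (1 - B ^ (θ-1))) + 4 * M * β^2 / (1 - β) := by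
    rw [← hβdef]
    have e1 : B ^ (2*θ) = (B ^ θ) * (B ^ θ) := by
      rw [← Real.rpow_add hB0]; ring_nf
    have hBθ0 : (0:ℝ) < B ^ θ := Real.rpow_pos_of_pos hB0 θ
    have eβ : β = (B ^ θ)⁻¹ := by rw [← hβinv, inv_inv]
    rw [e1, eβ]
    field_simp
  have hnorm : ∀ i : ℕ, ‖(v (B ^ i * x) - v (B ^ i * (x + h))) * β ^ (i + 1)‖
      = |v (B ^ i * x) - v (B ^ i * (x+h))| * β ^ (i+1) := by
    intro i
    rw [Real.norm_eq_abs, abs_mul, abs_of_nonneg (pow_nonneg hβ0.le _)]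
  calc |∑' i : ℕ, (v (B ^ i * x) - v (B ^ i * (x + h))) * β ^ (i + 1)|
      ≤ ∑' i : ℕ, ‖(v (B ^ i * x) - v (B ^ i * (x + h))) * β ^ (i + 1)‖ := by
        rw [← Real.norm_eq_abs]
        exact norm_tsum_le_tsum_norm (by simpa only [hnorm] using habs)
    _ = ∑' i : ℕ, |v (B ^ i * x) - v (B ^ i * (x+h))| * β ^ (i+1) := tsum_congr hnorm
    _ ≤ ∑' i : ℕ, φ i := Summable.tsum_le_tsum hterm habs hφsum
    _ = ∑ i ∈ Finset.range N, φ i + ∑' i : ℕ, φ (i + N) := (Summable.sum_add_tsum_nat_add N hφsum).symm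
    _ ≤ M' * (B ^ θ) / (1 - B ^ (θ-1)) * h ^ θ
        + (M' * (B ^ θ) / (1 - B ^ (θ-1)) + 4 * M * β^2 / (1 - β)) * h ^ θ :=
          add_le_add head_le tail_le
    _ = (2 * (M' * (B ^ θ) / (1 - B ^ (θ-1))) + 4 * M * β^2 / (1 - β)) * h ^ θ := by ring
    _ = (2 * M' / (B ^ (-θ) * (1 - B ^ (θ - 1)))
          + 4 * M / (B ^ (2 * θ) * (1 - B ^ (-θ)))) * h ^ θ := by rw [hRHS]

lemma stmt8_summable (B : ℝ) (hB0 : 0 < B) (β : ℝ) (hβ0 : 0 < β) (hβ1 : β < 1)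
    (v : ℝ → ℝ) (M : ℝ) (hM : ∀ y, |v y| ≤ M) (z : ℝ) :
    Summable (fun i : ℕ => v (B ^ i * z) * β ^ (i + 1)) := by
  apply Summable.of_norm
  have geo : Summable (fun i : ℕ => (M * β) * β ^ i) :=
    (summable_geometric_of_lt_one hβ0.le hβ1).mul_left _
  refine Summable.of_nonneg_of_le (fun i => norm_nonneg _) (fun i => ?_) geo
  rw [Real.norm_eq_abs, abs_mul, abs_of_nonneg (pow_nonneg hβ0.le _), pow_succ]
  calc |v (B ^ i * z)| * (β ^ i * β) ≤ M * (β ^ i * β) := by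
        exact mul_le_mul_of_nonneg_right (hM _) (by positivity)
    _ = M * β * β ^ i := by ring

/-- in the linear case `f = E_b`, the unique bounded solution
`α x = -∑' i, v(bⁱ x) b^{-θ(i+1)}` is θ-Hölder, and for increments
`0 < h < b⁻¹/2` the Hölder constant is bounded by the explicit constant
`2M'/(b^{-θ}(1-b^{θ-1})) + 4M/(b^{2θ}(1-b^{-θ}))`. -/
theorem stmt8 (b : ℕ) (hb : 1 < b) (θ : ℝ) (hθ0 : 0 < θ) (hθ1 : θ < 1)
    (v : ℝ → ℝ) (hv : ContDiff ℝ 1 v) (hvper : Function.Periodic v 1)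
    (M M' : ℝ) (hM : ∀ y, |v y| ≤ M) (hM' : ∀ y, |deriv v y| ≤ M')
    (α : ℝ → ℝ)
    (hα : α = fun x => -∑' i : ℕ,
      v ((b : ℝ) ^ i * x) * (b : ℝ) ^ (-(θ * ((i : ℝ) + 1)))) :
    (∃ C : ℝ, 0 < C ∧ ∀ x y : ℝ, |α x - α y| ≤ C * |x - y| ^ θ) ∧
    (∀ x h : ℝ, 0 < h → h < ((b : ℝ))⁻¹ / 2 →
      |α (x + h) - α x| ≤
        (2 * M' / ((b : ℝ) ^ (-θ) * (1 - (b : ℝ) ^ (θ - 1)))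
          + 4 * M / ((b : ℝ) ^ (2 * θ) * (1 - (b : ℝ) ^ (-θ)))) * h ^ θ) := by
  set B : ℝ := (b : ℝ) with hBdef
  have hB1 : 1 < B := by rw [hBdef]; exact_mod_cast hb
  have hB0 : (0:ℝ) < B := lt_trans one_pos hB1
  set β : ℝ := B ^ (-θ) with hβdef
  have hβ0 : 0 < β := Real.rpow_pos_of_pos hB0 _
  have hβ1 : β < 1 := Real.rpow_lt_one_of_one_lt_of_neg hB1 (by linarith)
  have hM0 : 0 ≤ M := le_trans (abs_nonneg _) (hM 0)
  have hM'0 : 0 ≤ M' := le_trans (abs_nonneg _) (hM' 0)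
  have hD1 : 0 < 1 - B ^ (θ - 1) := by
    have : B ^ (θ - 1) < 1 := Real.rpow_lt_one_of_one_lt_of_neg hB1 (by linarith)
    linarith
  have hD2 : 0 < 1 - β := by linarith
  -- lipschitz and cap
  have lip : ∀ y s : ℝ, |v (y + s) - v y| ≤ M' * |s| := by
    intro y s
    have h := Convex.norm_image_sub_le_of_norm_deriv_le (f := v) (C := M')
      (fun z _ => (hv.differentiable one_ne_zero).differentiableAt)
      (fun z _ => hM' z) convex_univ (Set.mem_univ y) (Set.mem_univ (y + s))
    simpa using h
  have cap : ∀ y z : ℝ, |v y - v z| ≤ M' / 2 := by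
    intro y z
    have hper : v (z + (y - z - (round (y - z) : ℤ))) = v y := by
      have h2 := hvper.sub_int_mul_eq (x := y) (n := round (y - z))
      rw [mul_one] at h2
      rw [show z + (y - z - (round (y - z) : ℤ)) = y - (round (y-z) : ℤ) by ring, h2]
    calc |v y - v z| = |v (z + (y - z - (round (y - z) : ℤ))) - v z| := by rw [hper]
      _ ≤ M' * |y - z - (round (y - z) : ℤ)| := lip _ _
      _ ≤ M' * (1/2) := mul_le_mul_of_nonneg_left (abs_sub_round (y-z)) hM'0
      _ = M' / 2 := by ring
  -- rewrite α with nat powers of β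
  have hpoweq : ∀ i : ℕ, B ^ (-(θ * ((i : ℝ) + 1))) = β ^ (i + 1) := by
    intro i
    rw [hβdef, show -(θ * ((i : ℝ) + 1)) = (-θ) * (((i + 1 : ℕ) : ℝ)) by push_cast; ring,
      Real.rpow_mul hB0.le, Real.rpow_natCast]
  have hαeq : ∀ z : ℝ, α z = -∑' i : ℕ, v (B ^ i * z) * β ^ (i + 1) := by
    intro z
    rw [hα]
    dsimp only
    congr 1
    exact tsum_congr (fun i => by rw [hpoweq i])
  have hsumm : ∀ z : ℝ, Summable (fun i : ℕ => v (B ^ i * z) * β ^ (i + 1)) :=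
    fun z => stmt8_summable B hB0 β hβ0 hβ1 v M hM z
  have hdiff : ∀ z w : ℝ, α z - α w
      = ∑' i : ℕ, (v (B ^ i * w) - v (B ^ i * z)) * β ^ (i + 1) := by
    intro z w
    rw [hαeq z, hαeq w]
    rw [show -∑' i : ℕ, v (B ^ i * z) * β ^ (i+1) - -∑' i : ℕ, v (B ^ i * w) * β ^ (i+1)
      = (∑' i : ℕ, v (B ^ i * w) * β ^ (i+1)) - ∑' i : ℕ, v (B ^ i * z) * β ^ (i+1) by ring]
    rw [← Summable.tsum_sub (hsumm w) (hsumm z)]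
    exact tsum_congr (fun i => by ring)
  have part2 : ∀ x h : ℝ, 0 < h → h < B⁻¹ / 2 →
      |α (x + h) - α x| ≤
        (2 * M' / (B ^ (-θ) * (1 - B ^ (θ - 1)))
          + 4 * M / (B ^ (2 * θ) * (1 - B ^ (-θ)))) * h ^ θ := by
    intro x h hh0 hh1
    rw [hdiff (x + h) x]
    exact stmt8_key B hB1 θ hθ0 hθ1 v M M' hM hM'0 lip cap x h hh0 hh1
  refine ⟨?_, part2⟩
  -- part 1
  set K : ℝ := 2 * M' / (B ^ (-θ) * (1 - B ^ (θ - 1)))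
      + 4 * M / (B ^ (2 * θ) * (1 - B ^ (-θ))) with hKdef
  have hK0 : 0 ≤ K := by
    rw [hKdef]
    have h1 : (0:ℝ) < B ^ (2*θ) := Real.rpow_pos_of_pos hB0 _
    have h2 : (0:ℝ) < B ^ (-θ) := hβ0
    positivity
  set S : ℝ := 2 * (M * β / (1 - β)) with hSdef
  have hsup : ∀ z : ℝ, |α z| ≤ M * β / (1 - β) := by
    intro z
    rw [hαeq z, abs_neg, ← Real.norm_eq_abs]
    have hnorm : Summable (fun i : ℕ => ‖v (B ^ i * z) * β ^ (i+1)‖) := by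
      simpa only [Real.norm_eq_abs] using (hsumm z).abs
    calc ‖∑' i : ℕ, v (B ^ i * z) * β ^ (i+1)‖
        ≤ ∑' i : ℕ, ‖v (B ^ i * z) * β ^ (i+1)‖ := norm_tsum_le_tsum_norm hnorm
      _ ≤ ∑' i : ℕ, (M * β) * β ^ i := by
          refine Summable.tsum_le_tsum (fun i => ?_) hnorm
            ((summable_geometric_of_lt_one hβ0.le hβ1).mul_left _)
          rw [Real.norm_eq_abs, abs_mul, abs_of_nonneg (pow_nonneg hβ0.le _), pow_succ]
          calc |v (B ^ i * z)| * (β ^ i * β) ≤ M * (β ^ i * β) :=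
                mul_le_mul_of_nonneg_right (hM _) (by positivity)
            _ = M * β * β ^ i := by ring
      _ = (M * β) * (1 - β)⁻¹ := by
          rw [tsum_mul_left, tsum_geometric_of_lt_one hβ0.le hβ1]
      _ = M * β / (1 - β) := by ring
  have hS0 : 0 ≤ S := by
    rw [hSdef]; positivity
  have h2B : (0:ℝ) < (2*B) ^ θ := Real.rpow_pos_of_pos (by positivity) _
  refine ⟨K + S * (2*B) ^ θ + 1, by positivity, ?_⟩
  intro x y
  rcases eq_or_ne x y with rfl | hne
  · simp [Real.zero_rpow hθ0.ne']
  rcases lt_or_ge |x - y| (B⁻¹ / 2) with hlt | hge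
  · have hKC : K ≤ K + S * (2*B) ^ θ + 1 := by nlinarith [hS0, h2B.le, mul_nonneg hS0 h2B.le]
    have hrp : 0 ≤ |x - y| ^ θ := Real.rpow_nonneg (abs_nonneg _) _
    rcases hne.lt_or_gt with hxy | hxy
    · have h0 : 0 < y - x := by linarith
      have h1 : y - x < B⁻¹/2 := by
        have : |x - y| = y - x := by rw [abs_sub_comm, abs_of_pos h0]
        linarith
      have hp2 := part2 x (y - x) h0 h1
      rw [show x + (y - x) = y by ring] at hp2
      have he : |x - y| = y - x := by rw [abs_sub_comm, abs_of_pos h0]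
      calc |α x - α y| = |α y - α x| := abs_sub_comm _ _
        _ ≤ K * (y - x) ^ θ := hp2
        _ = K * |x - y| ^ θ := by rw [he]
        _ ≤ (K + S * (2*B) ^ θ + 1) * |x - y| ^ θ :=
            mul_le_mul_of_nonneg_right hKC hrp
    · have h0 : 0 < x - y := by linarith
      have h1 : x - y < B⁻¹/2 := by
        have : |x - y| = x - y := abs_of_pos h0
        linarith
      have hp2 := part2 y (x - y) h0 h1
      rw [show y + (x - y) = x by ring] at hp2
      have he : |x - y| = x - y := abs_of_pos h0
      calc |α x - α y| ≤ K * (x - y) ^ θ := hp2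
        _ = K * |x - y| ^ θ := by rw [he]
        _ ≤ (K + S * (2*B) ^ θ + 1) * |x - y| ^ θ :=
            mul_le_mul_of_nonneg_right hKC hrp
  · -- far case
    have hS2 : |α x - α y| ≤ S := by
      calc |α x - α y| ≤ |α x| + |α y| := abs_sub _ _
        _ ≤ M * β / (1-β) + M * β / (1-β) := add_le_add (hsup x) (hsup y)
        _ = S := by rw [hSdef]; ring
    have hpow : ((2*B)⁻¹) ^ θ ≤ |x - y| ^ θ := by
      refine Real.rpow_le_rpow (by positivity) ?_ hθ0.le
      calc (2*B)⁻¹ = B⁻¹/2 := by rw [mul_inv]; ring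
        _ ≤ |x - y| := hge
    have hid : S * (2*B) ^ θ * ((2*B)⁻¹) ^ θ = S := by
      rw [Real.inv_rpow (by positivity), mul_assoc, mul_inv_cancel₀ h2B.ne']
      ring
    calc |α x - α y| ≤ S := hS2
      _ = S * (2*B) ^ θ * ((2*B)⁻¹) ^ θ := hid.symm
      _ ≤ S * (2*B) ^ θ * |x - y| ^ θ := by
          refine mul_le_mul_of_nonneg_left hpow (by positivity)
      _ ≤ (K + S * (2*B) ^ θ + 1) * |x - y| ^ θ := by
          refine mul_le_mul_of_nonneg_right ?_ (Real.rpow_nonneg (abs_nonneg _) _)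
          nlinarith [hK0, h2B, hS0]
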